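/- arXiv:1307.5090 — 2 statements merged into one kernel-verified Lean document; each statement's English description precedes it below -/
import Mathlib

section
/- Fix integers t ≥ 1 and 2 ≤ q_1 < q_2, and let (x_1,…,x_t,y_1,…,y_t) ∼ D_SO. Then: (1) each x_i is uniform on [q_1] and each y_j is uniform on [q_2]; (2) for each j, y_j is independent of the joint vector (x_1,…,x_t); (3) for every σ ∈ S_t, E[1_σ(x_1,…,x_t)] = E[1_σ(y_1,…,y_t)] = 1/t!, where 1_σ is evaluated via its extension to ℤ^t; (4) E[SO_{2t}(x_1,…,x_t,y_1,…,y_t)] ≥ 1 − t²/(2q_1) − q_1/q_2, where SO_{2t} is evaluated via its extension to ℤ^{2t}. -/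
open Classical Finset

noncomputable section
namespace OCSPPaper

set_option maxHeartbeats 1000000

/-- A permutation `σ` is compatible with the tuple `a` if `σ i < σ j` whenever `a i < a j`. -/
def compatiblePerm {m : ℕ} (a : Fin m → ℤ) (σ : Equiv.Perm (Fin m)) : Prop :=
  ∀ i j : Fin m, a i < a j → σ i < σ j

/-- The extension of an ordering predicate `P ⊆ S_m` to arbitrary integer tuples:
the fraction of compatible permutations that belong to `P`. -/
noncomputable def extPred {m : ℕ} (P : Finset (Equiv.Perm (Fin m))) (a : Fin m → ℤ) : ℝ :=
  ((Finset.univ.filter fun σ => compatiblePerm a σ ∧ σ ∈ P).card : ℝ) /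
    ((Finset.univ.filter fun σ => compatiblePerm a σ).card : ℝ)

/-- The Same-Order predicate `SO_{2t} ⊆ S_{2t}`: the relative order of the first `t` entries
coincides with the relative order of the last `t` entries. -/
def soPred (t : ℕ) : Finset (Equiv.Perm (Fin (t + t))) :=
  Finset.univ.filter fun σ => ∀ i j : Fin t,
    σ (Fin.castAdd t i) < σ (Fin.castAdd t j) ↔ σ (Fin.natAdd t i) < σ (Fin.natAdd t j)

/-- Density of the distribution `D_SO` on `ℤ^t × ℤ^t`: `x₁,…,x_t` independent uniform on
`[q₁]`, `z` uniform on `[q₂]`, and `y_j = x_j + z mod q₂`. -/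
noncomputable def dSO (t q1 q2 : ℕ) : (Fin t → ℤ) × (Fin t → ℤ) → ℝ := fun p =>
  if (∀ i, 0 ≤ p.1 i ∧ p.1 i < (q1 : ℤ)) ∧
      (∃ z : ℤ, 0 ≤ z ∧ z < (q2 : ℤ) ∧ ∀ j, p.2 j = (p.1 j + z) % (q2 : ℤ))
  then 1 / ((q1 : ℝ) ^ t * q2) else 0

lemma compat_exists {m : ℕ} (a : Fin m → ℤ) : ∃ σ, compatiblePerm a σ := by
  refine ⟨(Tuple.sort a)⁻¹, fun i j hij => ?_⟩
  by_contra h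
  push_neg at h
  rcases lt_or_eq_of_le h with h' | h'
  · have := Tuple.monotone_sort a (le_of_lt h')
    simp only [Function.comp_apply, Equiv.Perm.coe_inv, Equiv.apply_symm_apply] at this
    omega
  · have hji : j = i := by
      have := congrArg (Tuple.sort a) h'
      simpa using this
    subst hji
    exact absurd hij (lt_irrefl _)

lemma compatCard_pos {m : ℕ} (a : Fin m → ℤ) :
    0 < (Finset.univ.filter fun σ => compatiblePerm a σ).card := by
  obtain ⟨σ, hσ⟩ := compat_exists a
  exact Finset.card_pos.2 ⟨σ, by simp [hσ]⟩

lemma extPred_nonneg {m : ℕ} (P : Finset (Equiv.Perm (Fin m))) (a : Fin m → ℤ) :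
    0 ≤ extPred P a := by
  unfold extPred
  positivity

lemma extPred_single {m : ℕ} (σ : Equiv.Perm (Fin m)) (a : Fin m → ℤ) :
    extPred {σ} a = (if compatiblePerm a σ then 1 else 0) /
      ((Finset.univ.filter fun σ => compatiblePerm a σ).card : ℝ) := by
  unfold extPred
  congr 1
  have : (Finset.univ.filter fun ρ => compatiblePerm a ρ ∧ ρ ∈ ({σ} : Finset _)) =
      if compatiblePerm a σ then {σ} else ∅ := by
    by_cases h : compatiblePerm a σ <;> ext ρ <;> simp [h]
    · rintro rfl; simpa using h
    · rintro hc rfl; exact h hc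
  rw [this]
  by_cases h : compatiblePerm a σ <;> simp [h]

lemma sum_extPred_single {m : ℕ} (a : Fin m → ℤ) :
    ∑ σ : Equiv.Perm (Fin m), extPred {σ} a = 1 := by
  have hK := compatCard_pos a
  simp only [extPred_single]
  rw [← Finset.sum_div, Finset.sum_boole]
  rw [div_self]
  exact_mod_cast hK.ne'


lemma compat_comp {m : ℕ} (a : Fin m → ℤ) (τ ρ : Equiv.Perm (Fin m)) :
    compatiblePerm (fun i => a (τ i)) ρ ↔ compatiblePerm a (ρ * τ⁻¹) := by
  constructor
  · intro h i j hij
    simpa using h (τ⁻¹ i) (τ⁻¹ j) (by simpa using hij)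
  · intro h i j hij
    simpa using h (τ i) (τ j) hij

lemma extPred_comp {m : ℕ} (a : Fin m → ℤ) (τ σ : Equiv.Perm (Fin m)) :
    extPred {σ} (fun i => a (τ i)) = extPred {σ * τ⁻¹} a := by
  unfold extPred
  have h1 : (Finset.univ.filter fun ρ => compatiblePerm (fun i => a (τ i)) ρ).card
      = (Finset.univ.filter fun ρ => compatiblePerm a ρ).card := by
    apply Finset.card_bij (fun ρ _ => ρ * τ⁻¹)
    · intro ρ hρ
      simp only [Finset.mem_filter, Finset.mem_univ, true_and] at hρ ⊢
      exact (compat_comp a τ ρ).1 hρ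
    · intro ρ₁ h₁ ρ₂ h₂ h
      group at h
      exact mul_right_cancel h
    · intro ρ hρ
      simp only [Finset.mem_filter, Finset.mem_univ, true_and] at hρ
      refine ⟨ρ * τ, ?_, by group⟩
      simp only [Finset.mem_filter, Finset.mem_univ, true_and]
      rw [compat_comp]
      simpa [mul_assoc] using hρ
  have h2 : (Finset.univ.filter fun ρ => compatiblePerm (fun i => a (τ i)) ρ ∧ ρ ∈ ({σ} : Finset _)).card
      = (Finset.univ.filter fun ρ => compatiblePerm a ρ ∧ ρ ∈ ({σ * τ⁻¹} : Finset _)).card := by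
    apply Finset.card_bij (fun ρ _ => ρ * τ⁻¹)
    · intro ρ hρ
      simp only [Finset.mem_filter, Finset.mem_univ, true_and, Finset.mem_singleton] at hρ ⊢
      exact ⟨(compat_comp a τ ρ).1 hρ.1, by rw [hρ.2]⟩
    · intro ρ₁ h₁ ρ₂ h₂ h
      group at h
      exact mul_right_cancel h
    · intro ρ hρ
      simp only [Finset.mem_filter, Finset.mem_univ, true_and, Finset.mem_singleton] at hρ
      refine ⟨ρ * τ, ?_, by group⟩
      simp only [Finset.mem_filter, Finset.mem_univ, true_and, Finset.mem_singleton]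
      constructor
      · rw [compat_comp]; simpa [mul_assoc] using hρ.1
      · rw [hρ.2]; group
  rw [h1, h2]

lemma sum_extPred_const {t q : ℕ} (e : Fin q → ℤ) (σ : Equiv.Perm (Fin t)) :
    ∑ x : Fin t → Fin q, extPred {σ} (fun i => e (x i)) = (q : ℝ) ^ t / t.factorial := by
  set E : Equiv.Perm (Fin t) → ℝ := fun σ => ∑ x : Fin t → Fin q, extPred {σ} (fun i => e (x i))
    with hE
  have hconst : ∀ σ' : Equiv.Perm (Fin t), E σ' = E σ := by
    intro σ'
    have key : ∀ τ ρ : Equiv.Perm (Fin t), E ρ = E (ρ * τ⁻¹) := by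
      intro τ ρ
      have hbij : ∑ x : Fin t → Fin q, extPred {ρ} (fun i => e (x (τ i)))
          = ∑ x : Fin t → Fin q, extPred {ρ} (fun i => e (x i)) := by
        apply Fintype.sum_bijective (fun x : Fin t → Fin q => x ∘ τ)
        · constructor
          · intro x y hxy
            funext i
            have := congrFun hxy (τ⁻¹ i)
            simpa using this
          · intro y
            exact ⟨fun i => y (τ⁻¹ i), by funext i; simp⟩
        · intro x; rfl
      calc E ρ = ∑ x : Fin t → Fin q, extPred {ρ} (fun i => e (x (τ i))) := hbij.symm
        _ = ∑ x : Fin t → Fin q, extPred {ρ * τ⁻¹} (fun i => e (x i)) := by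
            refine Finset.sum_congr rfl fun x _ => ?_
            exact extPred_comp (fun i => e (x i)) τ ρ
        _ = E (ρ * τ⁻¹) := rfl
    have := key (σ⁻¹ * σ') σ'
    simpa [mul_assoc] using this
  have hsum : ∑ σ' : Equiv.Perm (Fin t), E σ' = (q : ℝ) ^ t := by
    rw [hE]
    rw [Finset.sum_comm]
    simp only [sum_extPred_single]
    simp [Finset.card_univ]
  rw [Finset.sum_congr rfl (fun σ' _ => hconst σ'), Finset.sum_const, Finset.card_univ,
    Fintype.card_perm, nsmul_eq_mul] at hsum
  have hfac : (0 : ℝ) < t.factorial := by positivity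
  field_simp at hsum ⊢
  simp only [Fintype.card_fin, hE] at hsum
  linarith [hsum]

lemma extPred_eq_one_of {m : ℕ} (P : Finset (Equiv.Perm (Fin m))) (a : Fin m → ℤ)
    (h : ∀ ρ, compatiblePerm a ρ → ρ ∈ P) : extPred P a = 1 := by
  unfold extPred
  have : (Finset.univ.filter fun σ => compatiblePerm a σ ∧ σ ∈ P)
      = (Finset.univ.filter fun σ => compatiblePerm a σ) := by
    ext ρ; simp only [Finset.mem_filter, Finset.mem_univ, true_and]
    exact ⟨fun h' => h'.1, fun h' => ⟨h', h ρ h'⟩⟩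
  rw [this, div_self]
  obtain ⟨σ, hσ⟩ := compat_exists a
  have : 0 < (Finset.univ.filter fun σ => compatiblePerm a σ).card :=
    Finset.card_pos.2 ⟨σ, by simp [hσ]⟩
  exact_mod_cast this.ne'

-- indicator sum lemmas
lemma sum_ind_fiber {t q1 : ℕ} (i : Fin t) (a : ℤ)
    (hfib : ∀ v : Fin q1, (Finset.univ.filter fun x : Fin t → Fin q1 => x i = v).card = q1 ^ (t-1)) :
    ∑ x : Fin t → Fin q1, (if ((x i : ℕ) : ℤ) = a then (1:ℝ) else 0)
      = if 0 ≤ a ∧ a < (q1:ℤ) then (q1:ℝ) ^ (t-1) else 0 := by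
  by_cases h : 0 ≤ a ∧ a < (q1:ℤ)
  · rw [if_pos h]
    have hv : a.toNat < q1 := by omega
    set v0 : Fin q1 := ⟨a.toNat, hv⟩ with hv0
    have he : ∀ x : Fin t → Fin q1, (((x i : ℕ) : ℤ) = a) ↔ x i = v0 := by
      intro x
      constructor
      · intro hx
        apply Fin.ext
        simp only [hv0]
        omega
      · intro hx
        rw [hx]
        simp only [hv0]
        omega
    simp only [he]
    rw [Finset.sum_boole, hfib v0]
    push_cast
    ring
  · rw [if_neg h]
    apply Finset.sum_eq_zero
    intro x _
    rw [if_neg]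
    intro hx
    have := (x i).isLt
    omega

lemma sum_ind_mod {q2 : ℕ} (hq2 : 0 < q2) (c b : ℤ) :
    ∑ z : Fin q2, (if (c + (z : ℤ)) % (q2:ℤ) = b then (1:ℝ) else 0)
      = if 0 ≤ b ∧ b < (q2:ℤ) then 1 else 0 := by
  by_cases h : 0 ≤ b ∧ b < (q2:ℤ)
  · rw [if_pos h]
    have hq2' : (0:ℤ) < q2 := by exact_mod_cast hq2
    have hz0nn : 0 ≤ (b - c) % (q2:ℤ) := Int.emod_nonneg _ (by omega)
    have hz0lt : (b - c) % (q2:ℤ) < q2 := Int.emod_lt_of_pos _ hq2'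
    set z0 : Fin q2 := ⟨((b - c) % (q2:ℤ)).toNat, by omega⟩ with hz0
    have he : ∀ z : Fin q2, ((c + (z:ℤ)) % (q2:ℤ) = b) ↔ z = z0 := by
      intro z
      constructor
      · intro hz
        have hzlt : (z : ℤ) < q2 := by exact_mod_cast z.isLt
        have h1 : (c + (z:ℤ)) % (q2:ℤ) = b % q2 := by
          rw [hz, Int.emod_eq_of_lt h.1 h.2]
        have h2 : ((z : ℤ)) % q2 = (b - c) % q2 := by
          have := Int.ModEq.sub_right c h1
          simpa [add_sub_cancel_left, Int.ModEq] using this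
        rw [Int.emod_eq_of_lt (by positivity) hzlt] at h2
        apply Fin.ext
        simp only [hz0]
        omega
      · intro hz
        subst hz
        have hcast : ((z0 : ℕ) : ℤ) = (b - c) % (q2:ℤ) := by
          simp only [hz0]
          omega
        rw [hcast]
        have h1 : (c + (b - c) % (q2:ℤ)) % q2 = (c + (b - c)) % q2 :=
          Int.ModEq.add_left c (Int.emod_emod_of_dvd _ dvd_rfl)
        rw [h1]
        have : c + (b - c) = b := by ring
        rw [this, Int.emod_eq_of_lt h.1 h.2]
    simp only [he]
    simp
  · rw [if_neg h]
    apply Finset.sum_eq_zero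
    intro z _
    rw [if_neg]
    intro hz
    have hq2' : (0:ℤ) < q2 := by exact_mod_cast hq2
    have h1 : 0 ≤ (c + (z:ℤ)) % (q2:ℤ) := Int.emod_nonneg _ (by omega)
    have h2 : (c + (z:ℤ)) % (q2:ℤ) < q2 := Int.emod_lt_of_pos _ hq2'
    omega

lemma sum_ind_vec {t q1 : ℕ} (x0 : Fin t → ℤ) :
    ∑ x : Fin t → Fin q1, (if (fun i => ((x i : ℕ) : ℤ)) = x0 then (1:ℝ) else 0)
      = if (∀ i, 0 ≤ x0 i ∧ x0 i < (q1:ℤ)) then 1 else 0 := by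
  by_cases h : ∀ i, 0 ≤ x0 i ∧ x0 i < (q1:ℤ)
  · rw [if_pos h]
    set xf : Fin t → Fin q1 := fun i => ⟨(x0 i).toNat, by have := h i; omega⟩ with hxf
    have he : ∀ x : Fin t → Fin q1, ((fun i => ((x i : ℕ) : ℤ)) = x0) ↔ x = xf := by
      intro x
      constructor
      · intro hx
        funext i
        have := congrFun hx i
        apply Fin.ext
        simp only [hxf]
        omega
      · intro hx
        subst hx
        funext i
        simp only [hxf]
        have := h i
        omega
    simp only [he]
    simp
  · rw [if_neg h]
    apply Finset.sum_eq_zero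
    intro x _
    rw [if_neg]
    intro hx
    push_neg at h
    obtain ⟨i, hi⟩ := h
    have := congrFun hx i
    have h1 := (x i).isLt
    omega


def phi (t q1 q2 : ℕ) : (Fin t → Fin q1) × Fin q2 → (Fin t → ℤ) × (Fin t → ℤ) :=
  fun xz => (fun i => (xz.1 i : ℤ), fun j => ((xz.1 j : ℤ) + (xz.2 : ℤ)) % (q2 : ℤ))

lemma phi_injective (t q1 q2 : ℕ) (ht : 1 ≤ t) : Function.Injective (phi t q1 q2) := by
  rintro ⟨x, z⟩ ⟨x', z'⟩ h
  simp only [phi, Prod.mk.injEq] at h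
  obtain ⟨h1, h2⟩ := h
  have hx : x = x' := by
    funext i
    have := congrFun h1 i
    exact Fin.ext (by exact_mod_cast this)
  subst hx
  have i0 : Fin t := ⟨0, ht⟩
  have hz := congrFun h2 i0
  have e1 : ((x i0 : ℤ) + (z : ℤ)) % (q2 : ℤ) = ((x i0 : ℤ) + (z' : ℤ)) % (q2 : ℤ) := hz
  have hq2 : (0 : ℤ) < q2 := by
    have := z.pos
    exact_mod_cast this
  have : (z : ℤ) = (z' : ℤ) := by
    have hmod : (z : ℤ) % q2 = (z' : ℤ) % q2 :=
      Int.ModEq.add_left_cancel' (x i0 : ℤ) e1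
    rw [Int.emod_eq_of_lt (by positivity) (by exact_mod_cast z.isLt),
      Int.emod_eq_of_lt (by positivity) (by exact_mod_cast z'.isLt)] at hmod
    exact hmod
  exact Prod.ext rfl (Fin.ext (by exact_mod_cast this))

lemma dSO_phi (t q1 q2 : ℕ) (xz : (Fin t → Fin q1) × Fin q2) :
    dSO t q1 q2 (phi t q1 q2 xz) = 1 / ((q1 : ℝ) ^ t * q2) := by
  unfold dSO phi
  rw [if_pos]
  constructor
  · intro i
    show (0:ℤ) ≤ ((xz.1 i : ℕ) : ℤ) ∧ ((xz.1 i : ℕ) : ℤ) < (q1:ℤ)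
    constructor
    · positivity
    · exact_mod_cast (xz.1 i).isLt
  · exact ⟨(xz.2 : ℤ), by positivity, by exact_mod_cast xz.2.isLt, fun j => rfl⟩

lemma dSO_support (t q1 q2 : ℕ) (p : (Fin t → ℤ) × (Fin t → ℤ)) (h : dSO t q1 q2 p ≠ 0) :
    p ∈ Set.range (phi t q1 q2) := by
  unfold dSO at h
  split_ifs at h with hc
  · obtain ⟨hx, z, hz0, hz1, hy⟩ := hc
    have hq2 : 0 < q2 := by
      by_contra hq
      push_neg at hq
      interval_cases q2
      omega
    refine ⟨(fun i => ⟨(p.1 i).toNat, ?_⟩, ⟨z.toNat, ?_⟩), ?_⟩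
    · have := hx i
      omega
    · omega
    · unfold phi
      refine Prod.ext (funext fun i => ?_) (funext fun j => ?_)
    
      · simp only [Fin.val_mk]
        have := hx i
        omega
      · simp only [Fin.val_mk]
        rw [hy j]
        congr 1
        have := hx j
        omega
  · exact absurd rfl h

lemma sum_dSO_mul (t q1 q2 : ℕ) (ht : 1 ≤ t) (f : (Fin t → ℤ) × (Fin t → ℤ) → ℝ) :
    (∑ᶠ p : (Fin t → ℤ) × (Fin t → ℤ), dSO t q1 q2 p * f p)
      = ∑ xz : (Fin t → Fin q1) × Fin q2,
          (1 / ((q1 : ℝ) ^ t * q2)) * f (phi t q1 q2 xz) := by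
  classical
  rw [finsum_eq_sum_of_support_subset (fun p => dSO t q1 q2 p * f p)
    (s := Finset.image (phi t q1 q2) Finset.univ) ?_]
  · rw [Finset.sum_image (fun a _ b _ h => phi_injective t q1 q2 ht h)]
    exact Finset.sum_congr rfl fun xz _ => by rw [dSO_phi]
  · intro p hp
    simp only [Function.mem_support] at hp
    have : dSO t q1 q2 p ≠ 0 := fun h => hp (by rw [h]; ring)
    obtain ⟨xz, hxz⟩ := dSO_support t q1 q2 p this
    exact Finset.mem_coe.2 (Finset.mem_image.2 ⟨xz, Finset.mem_univ _, hxz⟩)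

def fiberEquiv {t q : ℕ} (j : Fin t) (w : ({k : Fin t // k ≠ j} → Fin q) → Fin q) :
    {x : Fin t → Fin q // x j = w (fun k => x k.1)} ≃ ({k : Fin t // k ≠ j} → Fin q) where
  toFun x := fun k => x.1 k.1
  invFun g := ⟨fun k => if h : k = j then w g else g ⟨k, h⟩, by
    refine (dif_pos rfl).trans ?_
    congr 1
    funext k
    show g k = if h : (k : Fin t) = j then w g else g ⟨(k : Fin t), h⟩
    rw [dif_neg k.2]⟩
  left_inv := by
    rintro ⟨x, hx⟩
    ext k
    simp only
    by_cases h : (k : Fin t) = j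
    · rw [dif_pos h, h, hx]
    · rw [dif_neg h]
  right_inv := by
    intro g
    funext k
    simp only [dif_neg k.2]

lemma card_fiber {t q : ℕ} (j : Fin t) (w : ({k : Fin t // k ≠ j} → Fin q) → Fin q) :
    (Finset.univ.filter fun x : Fin t → Fin q => x j = w (fun k => x k.1)).card
      = q ^ (t - 1) := by
  rw [← Fintype.card_subtype]
  rw [Fintype.card_congr (fiberEquiv j w)]
  rw [Fintype.card_fun]
  congr 1
  · exact Fintype.card_fin q
  · rw [Fintype.card_subtype_compl, Fintype.card_subtype_eq, Fintype.card_fin]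

lemma card_fiber_const {t q : ℕ} (j : Fin t) (v : Fin q) :
    (Finset.univ.filter fun x : Fin t → Fin q => x j = v).card = q ^ (t - 1) :=
  card_fiber j (fun _ => v)

lemma card_fiber_eq {t q : ℕ} {i j : Fin t} (hij : i ≠ j) :
    (Finset.univ.filter fun x : Fin t → Fin q => x i = x j).card = q ^ (t - 1) := by
  have := card_fiber (q := q) j (fun g => g ⟨i, hij⟩)
  rw [← this]
  congr 1
  apply Finset.filter_congr
  intro x _
  simp only
  exact eq_comm

-- count of noninjective tuples
lemma card_noninj {t q : ℕ} :
    2 * (Finset.univ.filter fun x : Fin t → Fin q => ¬ Function.Injective x).card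
      ≤ (t * t - t) * q ^ (t - 1) := by
  set pairs : Finset (Fin t × Fin t) := Finset.univ.filter fun p => p.1 < p.2 with hpairs
  have hsub : (Finset.univ.filter fun x : Fin t → Fin q => ¬ Function.Injective x)
      ⊆ pairs.biUnion (fun p => Finset.univ.filter fun x : Fin t → Fin q => x p.1 = x p.2) := by
    intro x hx
    simp only [Finset.mem_filter, Finset.mem_univ, true_and] at hx
    unfold Function.Injective at hx
    push_neg at hx
    obtain ⟨i, j, hEq, hne⟩ := hx
    rcases lt_or_gt_of_ne hne with h | h
    · exact Finset.mem_biUnion.2 ⟨(i, j), by simp [hpairs, h], by simp [hEq]⟩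
    · exact Finset.mem_biUnion.2 ⟨(j, i), by simp [hpairs, h], by simp [hEq]⟩
  have hcard : (Finset.univ.filter fun x : Fin t → Fin q => ¬ Function.Injective x).card
      ≤ pairs.card * q ^ (t - 1) := by
    calc _ ≤ (pairs.biUnion (fun p => Finset.univ.filter fun x : Fin t → Fin q => x p.1 = x p.2)).card :=
          Finset.card_le_card hsub
      _ ≤ ∑ p ∈ pairs, (Finset.univ.filter fun x : Fin t → Fin q => x p.1 = x p.2).card :=
          Finset.card_biUnion_le
      _ ≤ ∑ p ∈ pairs, q ^ (t - 1) := by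
          apply Finset.sum_le_sum
          intro p hp
          simp only [hpairs, Finset.mem_filter] at hp
          rw [card_fiber_eq (ne_of_lt hp.2)]
      _ = pairs.card * q ^ (t - 1) := by rw [Finset.sum_const, smul_eq_mul]
  have hpairscard : 2 * pairs.card ≤ t * t - t := by
    have h1 : pairs.card = (Finset.univ.filter fun p : Fin t × Fin t => p.2 < p.1).card := by
      apply Finset.card_bij (fun p _ => (p.2, p.1))
      · intro p hp
        simp only [hpairs, Finset.mem_filter, Finset.mem_univ, true_and] at hp ⊢
        exact hp
      · intro p₁ h₁ p₂ h₂ h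
        simp only [Prod.mk.injEq] at h
        exact Prod.ext h.2 h.1
      · intro p hp
        simp only [Finset.mem_filter, Finset.mem_univ, true_and] at hp
        refine ⟨(p.2, p.1), ?_, by simp⟩
        simp only [hpairs, Finset.mem_filter, Finset.mem_univ, true_and]
        exact hp
    have h2 : pairs ∪ (Finset.univ.filter fun p : Fin t × Fin t => p.2 < p.1)
        ⊆ Finset.univ.filter fun p : Fin t × Fin t => p.1 ≠ p.2 := by
      intro p hp
      simp only [Finset.mem_filter, Finset.mem_univ, true_and]
      rcases Finset.mem_union.1 hp with h | h <;>
        simp only [hpairs, Finset.mem_filter, Finset.mem_univ, true_and] at h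
      · exact ne_of_lt h
      · exact ne_of_gt h
    have h3 : Disjoint pairs (Finset.univ.filter fun p : Fin t × Fin t => p.2 < p.1) := by
      rw [Finset.disjoint_left]
      intro p hp hq
      simp only [hpairs, Finset.mem_filter, Finset.mem_univ, true_and] at hp hq
      exact lt_asymm hp hq
    have h4 := Finset.card_union_of_disjoint h3
    have h5 := Finset.card_le_card h2
    have h6 : (Finset.univ.filter fun p : Fin t × Fin t => p.1 ≠ p.2).card = t * t - t := by
      have he : (Finset.univ.filter fun p : Fin t × Fin t => p.1 ≠ p.2)
          = (Finset.univ : Finset (Fin t)).offDiag := by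
        ext p
        simp [Finset.mem_offDiag]
      rw [he, Finset.offDiag_card]
      simp [Finset.card_univ]
    omega
  calc 2 * (Finset.univ.filter fun x : Fin t → Fin q => ¬ Function.Injective x).card
      ≤ 2 * (pairs.card * q ^ (t - 1)) := Nat.mul_le_mul_left 2 hcard
    _ = (2 * pairs.card) * q ^ (t - 1) := by ring
    _ ≤ (t * t - t) * q ^ (t - 1) := Nat.mul_le_mul_right _ hpairscard


lemma extPred_SO {t : ℕ} (a b : Fin t → ℤ) (ha : Function.Injective a)
    (hord : ∀ i j, a i < a j ↔ b i < b j) :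
    extPred (soPred t) (Fin.append a b) = 1 := by
  apply extPred_eq_one_of
  intro ρ hρ
  have hb : Function.Injective b := by
    intro i j hij
    by_contra hne
    rcases (ha.ne_iff.2 hne : a i ≠ a j).lt_or_gt with h | h
    · exact absurd ((hord i j).1 h) (by omega)
    · exact absurd ((hord j i).1 h) (by omega)
  have hcompa : ∀ i j, a i < a j ↔ ρ (Fin.castAdd t i) < ρ (Fin.castAdd t j) := by
    intro i j
    constructor
    · intro h
      have := hρ (Fin.castAdd t i) (Fin.castAdd t j)
      simp only [Fin.append_left] at this
      exact this h
    · intro h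
      by_contra hna
      rcases eq_or_lt_of_le (not_lt.1 hna) with h' | h'
      · have : i = j := ha h'.symm  -- a j = a i? careful
        subst this
        exact absurd h (lt_irrefl _)
      · have := hρ (Fin.castAdd t j) (Fin.castAdd t i)
        simp only [Fin.append_left] at this
        exact absurd (this h') (by omega)
  have hcompb : ∀ i j, b i < b j ↔ ρ (Fin.natAdd t i) < ρ (Fin.natAdd t j) := by
    intro i j
    constructor
    · intro h
      have := hρ (Fin.natAdd t i) (Fin.natAdd t j)
      simp only [Fin.append_right] at this
      exact this h
    · intro h
      by_contra hna
      rcases eq_or_lt_of_le (not_lt.1 hna) with h' | h'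
      · have : i = j := hb h'.symm
        subst this
        exact absurd h (lt_irrefl _)
      · have := hρ (Fin.natAdd t j) (Fin.natAdd t i)
        simp only [Fin.append_right] at this
        exact absurd (this h') (by omega)
  simp only [soPred, Finset.mem_filter, Finset.mem_univ, true_and]
  intro i j
  rw [← hcompa i j, ← hcompb i j]
  exact hord i j


/-- properties of the base distribution `D_SO`.
(1) each `x_i` is uniform on `[q₁]` and each `y_j` is uniform on `[q₂]`;
(2) each `y_j` is independent of the joint vector `x`;
(3) each of the two halves has a uniformly random relative order: `E[1_σ] = 1/t!`;
(4) `E[SO_{2t}(x, y)] ≥ 1 - t²/(2q₁) - q₁/q₂`. -/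
theorem dSO_properties (t q1 q2 : ℕ) (ht : 1 ≤ t) (hq1 : 2 ≤ q1) (hq12 : q1 < q2) :
    (∀ (i : Fin t) (a : ℤ),
      (∑ᶠ p : (Fin t → ℤ) × (Fin t → ℤ), if p.1 i = a then dSO t q1 q2 p else 0)
        = if 0 ≤ a ∧ a < (q1 : ℤ) then 1 / (q1 : ℝ) else 0) ∧
    (∀ (j : Fin t) (b : ℤ),
      (∑ᶠ p : (Fin t → ℤ) × (Fin t → ℤ), if p.2 j = b then dSO t q1 q2 p else 0)
        = if 0 ≤ b ∧ b < (q2 : ℤ) then 1 / (q2 : ℝ) else 0) ∧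
    (∀ (j : Fin t) (x0 : Fin t → ℤ) (b : ℤ),
      (∑ᶠ p : (Fin t → ℤ) × (Fin t → ℤ), if p.1 = x0 ∧ p.2 j = b then dSO t q1 q2 p else 0)
        = (∑ᶠ p : (Fin t → ℤ) × (Fin t → ℤ), if p.1 = x0 then dSO t q1 q2 p else 0) *
          (∑ᶠ p : (Fin t → ℤ) × (Fin t → ℤ), if p.2 j = b then dSO t q1 q2 p else 0)) ∧
    (∀ σ : Equiv.Perm (Fin t),
      (∑ᶠ p : (Fin t → ℤ) × (Fin t → ℤ), dSO t q1 q2 p * extPred {σ} p.1)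
        = 1 / (t.factorial : ℝ)) ∧
    (∀ σ : Equiv.Perm (Fin t),
      (∑ᶠ p : (Fin t → ℤ) × (Fin t → ℤ), dSO t q1 q2 p * extPred {σ} p.2)
        = 1 / (t.factorial : ℝ)) ∧
    (∑ᶠ p : (Fin t → ℤ) × (Fin t → ℤ),
        dSO t q1 q2 p * extPred (soPred t) (Fin.append p.1 p.2))
      ≥ 1 - (t : ℝ) ^ 2 / (2 * q1) - (q1 : ℝ) / q2 := by
  have hq2n : 0 < q2 := by omega
  have hq1' : (0:ℝ) < q1 := by exact_mod_cast (by omega : 0 < q1)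
  have hq2' : (0:ℝ) < q2 := by exact_mod_cast hq2n
  have hN : (0:ℝ) < (q1 : ℝ) ^ t * q2 := by positivity
  have hpow : (q1:ℝ) ^ t = (q1:ℝ) ^ (t-1) * q1 := by
    conv_lhs => rw [show t = (t-1)+1 by omega]
    rw [pow_succ]
  have hcardfun : (Fintype.card (Fin t → Fin q1) : ℝ) = (q1:ℝ) ^ t := by
    rw [Fintype.card_fun, Fintype.card_fin, Fintype.card_fin]
    push_cast
    ring
  -- Part 2, proved first so it can be reused in part 3.
  have hp2 : ∀ (j : Fin t) (b : ℤ),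
      (∑ᶠ p : (Fin t → ℤ) × (Fin t → ℤ), if p.2 j = b then dSO t q1 q2 p else 0)
        = if 0 ≤ b ∧ b < (q2 : ℤ) then 1 / (q2 : ℝ) else 0 := by
    intro j b
    have hrw : (∑ᶠ p : (Fin t → ℤ) × (Fin t → ℤ), if p.2 j = b then dSO t q1 q2 p else 0)
        = ∑ᶠ p : (Fin t → ℤ) × (Fin t → ℤ),
            dSO t q1 q2 p * (if p.2 j = b then (1:ℝ) else 0) := by
      apply finsum_congr
      intro p
      by_cases h : p.2 j = b <;> simp [h]
    rw [hrw, sum_dSO_mul t q1 q2 ht _, Fintype.sum_prod_type]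
    simp only [phi]
    have hinner : ∀ x : Fin t → Fin q1,
        (∑ z : Fin q2, (1 / ((q1:ℝ) ^ t * q2)) *
            (if ((x j : ℤ) + (z : ℤ)) % (q2:ℤ) = b then (1:ℝ) else 0))
          = (1 / ((q1:ℝ) ^ t * q2)) * (if 0 ≤ b ∧ b < (q2:ℤ) then 1 else 0) := by
      intro x
      rw [← Finset.mul_sum, sum_ind_mod hq2n]
    erw [Finset.sum_congr rfl fun x _ => hinner x, Finset.sum_const, Finset.card_univ,
      nsmul_eq_mul, hcardfun]
    by_cases hb : 0 ≤ b ∧ b < (q2:ℤ)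
    · rw [if_pos hb, if_pos hb]
      field_simp
    · rw [if_neg hb, if_neg hb]
      ring
  refine ⟨?_, hp2, ?_, ?_, ?_, ?_⟩
  -- Part 1
  · intro i a
    have hrw : (∑ᶠ p : (Fin t → ℤ) × (Fin t → ℤ), if p.1 i = a then dSO t q1 q2 p else 0)
        = ∑ᶠ p : (Fin t → ℤ) × (Fin t → ℤ),
            dSO t q1 q2 p * (if p.1 i = a then (1:ℝ) else 0) := by
      apply finsum_congr
      intro p
      by_cases h : p.1 i = a <;> simp [h]
    rw [hrw, sum_dSO_mul t q1 q2 ht _, Fintype.sum_prod_type]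
    simp only [phi]
    have hinner : ∀ x : Fin t → Fin q1,
        (∑ _z : Fin q2, (1 / ((q1:ℝ) ^ t * q2)) * (if ((x i : ℕ) : ℤ) = a then (1:ℝ) else 0))
          = (q2 : ℝ) * ((1 / ((q1:ℝ) ^ t * q2)) * (if ((x i : ℕ) : ℤ) = a then (1:ℝ) else 0)) := by
      intro x
      rw [Finset.sum_const, Finset.card_univ, Fintype.card_fin, nsmul_eq_mul]
    erw [Finset.sum_congr rfl fun x _ => hinner x]
    rw [← Finset.mul_sum, ← Finset.mul_sum, sum_ind_fiber i a (fun v => card_fiber_const i v)]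
    by_cases hb : 0 ≤ a ∧ a < (q1:ℤ)
    · rw [if_pos hb, if_pos hb, hpow]
      field_simp
    · rw [if_neg hb, if_neg hb]
      ring
  -- Part 3
  · intro j x0 b
    have hM1 : (∑ᶠ p : (Fin t → ℤ) × (Fin t → ℤ), if p.1 = x0 then dSO t q1 q2 p else 0)
        = (1 / ((q1:ℝ) ^ t * q2)) * (q2 : ℝ) *
            (if (∀ i, 0 ≤ x0 i ∧ x0 i < (q1:ℤ)) then 1 else 0) := by
      have hrw : (∑ᶠ p : (Fin t → ℤ) × (Fin t → ℤ), if p.1 = x0 then dSO t q1 q2 p else 0)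
          = ∑ᶠ p : (Fin t → ℤ) × (Fin t → ℤ),
              dSO t q1 q2 p * (if p.1 = x0 then (1:ℝ) else 0) := by
        apply finsum_congr
        intro p
        by_cases h : p.1 = x0 <;> simp [h]
      rw [hrw, sum_dSO_mul t q1 q2 ht _, Fintype.sum_prod_type]
      simp only [phi]
      have hinner : ∀ x : Fin t → Fin q1,
          (∑ _z : Fin q2, (1 / ((q1:ℝ) ^ t * q2)) *
              (if (fun i => ((x i : ℕ) : ℤ)) = x0 then (1:ℝ) else 0))
            = (q2 : ℝ) * ((1 / ((q1:ℝ) ^ t * q2)) *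
              (if (fun i => ((x i : ℕ) : ℤ)) = x0 then (1:ℝ) else 0)) := by
        intro x
        rw [Finset.sum_const, Finset.card_univ, Fintype.card_fin, nsmul_eq_mul]
      erw [Finset.sum_congr rfl fun x _ => hinner x, ← Finset.mul_sum, ← Finset.mul_sum,
        sum_ind_vec x0]
      ring
    have hLHS : (∑ᶠ p : (Fin t → ℤ) × (Fin t → ℤ),
          if p.1 = x0 ∧ p.2 j = b then dSO t q1 q2 p else 0)
        = (1 / ((q1:ℝ) ^ t * q2)) * ((if (∀ i, 0 ≤ x0 i ∧ x0 i < (q1:ℤ)) then 1 else 0) *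
            (if 0 ≤ b ∧ b < (q2:ℤ) then 1 else 0)) := by
      have hrw : (∑ᶠ p : (Fin t → ℤ) × (Fin t → ℤ),
            if p.1 = x0 ∧ p.2 j = b then dSO t q1 q2 p else 0)
          = ∑ᶠ p : (Fin t → ℤ) × (Fin t → ℤ),
              dSO t q1 q2 p *
                ((if p.1 = x0 then (1:ℝ) else 0) * (if p.2 j = b then (1:ℝ) else 0)) := by
        apply finsum_congr
        intro p
        by_cases h1 : p.1 = x0 <;> by_cases h2 : p.2 j = b <;> simp [h1, h2]
      rw [hrw, sum_dSO_mul t q1 q2 ht _, Fintype.sum_prod_type]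
      simp only [phi]
      have hinner : ∀ x : Fin t → Fin q1,
          (∑ z : Fin q2, (1 / ((q1:ℝ) ^ t * q2)) *
              ((if (fun i => ((x i : ℕ) : ℤ)) = x0 then (1:ℝ) else 0) *
                (if ((x j : ℤ) + (z : ℤ)) % (q2:ℤ) = b then (1:ℝ) else 0)))
            = (1 / ((q1:ℝ) ^ t * q2)) *
                ((if (fun i => ((x i : ℕ) : ℤ)) = x0 then (1:ℝ) else 0) *
                  (if 0 ≤ b ∧ b < (q2:ℤ) then 1 else 0)) := by
        intro x
        have : ∀ z : Fin q2, (1 / ((q1:ℝ) ^ t * q2)) *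
              ((if (fun i => ((x i : ℕ) : ℤ)) = x0 then (1:ℝ) else 0) *
                (if ((x j : ℤ) + (z : ℤ)) % (q2:ℤ) = b then (1:ℝ) else 0))
            = ((1 / ((q1:ℝ) ^ t * q2)) * (if (fun i => ((x i : ℕ) : ℤ)) = x0 then (1:ℝ) else 0)) *
                (if ((x j : ℤ) + (z : ℤ)) % (q2:ℤ) = b then (1:ℝ) else 0) := by
          intro z
          ring
        rw [Finset.sum_congr rfl fun z _ => this z, ← Finset.mul_sum, sum_ind_mod hq2n]
        ring
      erw [Finset.sum_congr rfl fun x _ => hinner x, ← Finset.mul_sum, ← Finset.sum_mul,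
        sum_ind_vec x0]
    rw [hLHS, hM1, hp2 j b]
    by_cases h1 : (∀ i, 0 ≤ x0 i ∧ x0 i < (q1:ℤ)) <;> by_cases h2 : 0 ≤ b ∧ b < (q2:ℤ) <;>
      simp only [h1, h2, and_self, implies_true, if_pos, if_neg, if_true, if_false] <;> field_simp <;> ring
  -- Part 4
  · intro σ
    rw [sum_dSO_mul t q1 q2 ht _, Fintype.sum_prod_type]
    simp only [phi]
    have hinner : ∀ x : Fin t → Fin q1,
        (∑ _z : Fin q2, (1 / ((q1:ℝ) ^ t * q2)) * extPred {σ} (fun i => ((x i : ℕ) : ℤ)))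
          = (q2:ℝ) * ((1 / ((q1:ℝ) ^ t * q2)) * extPred {σ} (fun i => ((x i : ℕ) : ℤ))) := by
      intro x
      rw [Finset.sum_const, Finset.card_univ, Fintype.card_fin, nsmul_eq_mul]
    rw [Finset.sum_congr rfl fun x _ => hinner x]
    rw [← Finset.mul_sum, ← Finset.mul_sum, sum_extPred_const (fun v : Fin q1 => ((v : ℕ) : ℤ)) σ]
    have hfac : (0:ℝ) < t.factorial := by
      exact_mod_cast t.factorial_pos
    field_simp
  -- Part 5
  · intro σ
    rw [sum_dSO_mul t q1 q2 ht _, Fintype.sum_prod_type]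
    simp only [phi]
    rw [Finset.sum_comm]
    have hinner : ∀ z : Fin q2,
        (∑ x : Fin t → Fin q1, (1 / ((q1:ℝ) ^ t * q2)) *
            extPred {σ} (fun j => ((x j : ℤ) + (z : ℤ)) % (q2:ℤ)))
          = (1 / ((q1:ℝ) ^ t * q2)) * ((q1:ℝ) ^ t / t.factorial) := by
      intro z
      rw [← Finset.mul_sum, sum_extPred_const (fun v : Fin q1 => ((v : ℤ) + (z : ℤ)) % (q2:ℤ)) σ]
    rw [Finset.sum_congr rfl fun z _ => hinner z, Finset.sum_const, Finset.card_univ,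
      Fintype.card_fin, nsmul_eq_mul]
    have hfac : (0:ℝ) < t.factorial := by
      exact_mod_cast t.factorial_pos
    field_simp
  -- Part 6
  · rw [ge_iff_le, sum_dSO_mul t q1 q2 ht _, Fintype.sum_prod_type]
    simp only [phi]
    set I : ℕ := (Finset.univ.filter fun x : Fin t → Fin q1 => Function.Injective x).card
      with hI
    set W : ℕ := (Finset.univ.filter fun z : Fin q2 => (z : ℕ) + q1 ≤ q2).card with hW
    have hpoint : ∀ (x : Fin t → Fin q1) (z : Fin q2),
        (if Function.Injective x then (1:ℝ) else 0) * (if (z : ℕ) + q1 ≤ q2 then (1:ℝ) else 0)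
          ≤ extPred (soPred t)
              (Fin.append (fun i => ((x i : ℕ) : ℤ)) (fun j => ((x j : ℤ) + (z : ℤ)) % (q2:ℤ))) := by
      intro x z
      by_cases hx : Function.Injective x
      · by_cases hz : (z : ℕ) + q1 ≤ q2
        · rw [if_pos hx, if_pos hz, one_mul]
          have hmod : (fun j => ((x j : ℤ) + (z : ℤ)) % (q2:ℤ))
              = fun j => ((x j : ℤ) + (z : ℤ)) := by
            funext j
            apply Int.emod_eq_of_lt
            · positivity
            · have h1 : (x j : ℕ) < q1 := (x j).isLt
              have h2 : (z : ℕ) < q2 := z.isLt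
              push_cast
              omega
          rw [hmod]
          have ha : Function.Injective (fun i => ((x i : ℕ) : ℤ)) := by
            intro i j hij
            have hij' : ((x i : ℕ) : ℤ) = ((x j : ℕ) : ℤ) := hij
            apply hx
            apply Fin.ext
            omega
          have hord : ∀ i j : Fin t, ((x i : ℕ) : ℤ) < ((x j : ℕ) : ℤ) ↔
              (((x i : ℕ) : ℤ) + (z : ℤ)) < (((x j : ℕ) : ℤ) + (z : ℤ)) := by
            intro i j
            omega
          rw [extPred_SO _ _ ha hord]
      -- impossible to reach: handled below
        · rw [if_neg hz, mul_zero]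
          apply extPred_nonneg
      · rw [if_neg hx, zero_mul]
        apply extPred_nonneg
    have hsumlb : ((I:ℝ) * W) * (1 / ((q1:ℝ) ^ t * q2))
        ≤ ∑ x : Fin t → Fin q1, ∑ z : Fin q2, (1 / ((q1:ℝ) ^ t * q2)) *
            extPred (soPred t)
              (Fin.append (fun i => ((x i : ℕ) : ℤ)) (fun j => ((x j : ℤ) + (z : ℤ)) % (q2:ℤ))) := by
      have step1 : ((I:ℝ) * W) * (1 / ((q1:ℝ) ^ t * q2))
          = ∑ x : Fin t → Fin q1, ∑ z : Fin q2, (1 / ((q1:ℝ) ^ t * q2)) *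
              ((if Function.Injective x then (1:ℝ) else 0) *
                (if (z : ℕ) + q1 ≤ q2 then (1:ℝ) else 0)) := by
        have hIr : (I:ℝ) = ∑ x : Fin t → Fin q1, (if Function.Injective x then (1:ℝ) else 0) := by
          rw [Finset.sum_boole, hI]
        have hWr : (W:ℝ) = ∑ z : Fin q2, (if (z : ℕ) + q1 ≤ q2 then (1:ℝ) else 0) := by
          rw [Finset.sum_boole, hW]
        rw [hIr, hWr, Finset.sum_mul_sum, Finset.sum_mul]
        apply Finset.sum_congr rfl
        intro x _
        rw [Finset.sum_mul]
        apply Finset.sum_congr rfl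
        intro z _
        ring
      rw [step1]
      apply Finset.sum_le_sum
      intro x _
      apply Finset.sum_le_sum
      intro z _
      have := hpoint x z
      have hNpos : (0:ℝ) ≤ 1 / ((q1:ℝ) ^ t * q2) := by positivity
      exact mul_le_mul_of_nonneg_left this hNpos
    refine le_trans ?_ hsumlb
    -- numeric bounds
    have hIub : I ≤ q1 ^ t := by
      calc I ≤ (Finset.univ : Finset (Fin t → Fin q1)).card := Finset.card_le_card
              (Finset.filter_subset _ _)
        _ = q1 ^ t := by rw [Finset.card_univ, Fintype.card_fun, Fintype.card_fin, Fintype.card_fin]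
    have hWub : W ≤ q2 := by
      calc W ≤ (Finset.univ : Finset (Fin q2)).card := Finset.card_le_card
              (Finset.filter_subset _ _)
        _ = q2 := by rw [Finset.card_univ, Fintype.card_fin]
    have hWlb : q2 - q1 ≤ W := by
      have : ((Finset.univ : Finset (Fin (q2 - q1))).card) ≤ W := by
        apply Finset.card_le_card_of_injOn (fun i : Fin (q2 - q1) => (⟨(i : ℕ), by omega⟩ : Fin q2))
        · intro i _
          simp only [hW, Finset.coe_filter, Finset.mem_coe, Set.mem_setOf_eq, Finset.mem_filter, Finset.mem_univ, true_and, Fin.val_mk]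
          have := i.isLt
          omega
        · intro i _ i' _ h
          apply Fin.ext
          simpa [Fin.ext_iff] using h
      simpa using this
    have hIlb : 2 * (q1 ^ t) ≤ 2 * I + (t * t - t) * q1 ^ (t - 1) := by
      have hpart := Finset.card_filter_add_card_filter_not
        (s := (Finset.univ : Finset (Fin t → Fin q1)))
        (p := fun x => Function.Injective x)
      have hcn := card_noninj (t := t) (q := q1)
      have huniv : (Finset.univ : Finset (Fin t → Fin q1)).card = q1 ^ t := by
        rw [Finset.card_univ, Fintype.card_fun, Fintype.card_fin, Fintype.card_fin]
      omega
    -- cast everything to ℝ and finish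
    have hImul : ((I:ℝ)) ≥ (q1:ℝ) ^ t - ((t:ℝ) * t - t) * (q1:ℝ) ^ (t-1) / 2 := by
      have h1 : ((2 * (q1 ^ t) : ℕ) : ℝ) ≤ ((2 * I + (t * t - t) * q1 ^ (t - 1) : ℕ) : ℝ) := by
        exact_mod_cast hIlb
      have h2 : ((t * t - t : ℕ) : ℝ) = (t:ℝ) * t - t := by
        have : t ≤ t * t := Nat.le_mul_of_pos_left t (by omega)
        push_cast [Nat.cast_sub this]
        ring
      push_cast [h2] at h1
      linarith
    have hWmul : ((W:ℝ)) ≥ (q2:ℝ) - q1 := by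
      have h1 : ((q2 - q1 : ℕ) : ℝ) ≤ (W:ℝ) := by exact_mod_cast hWlb
      rw [Nat.cast_sub (le_of_lt hq12)] at h1
      linarith
    have hIub' : (I:ℝ) ≤ (q1:ℝ) ^ t := by exact_mod_cast hIub
    have hWub' : (W:ℝ) ≤ (q2:ℝ) := by exact_mod_cast hWub
    have hI0 : (0:ℝ) ≤ I := Nat.cast_nonneg I
    have hW0 : (0:ℝ) ≤ W := Nat.cast_nonneg W
    have ht' : (1:ℝ) ≤ t := by exact_mod_cast ht
    have hq1r : (2:ℝ) ≤ q1 := by exact_mod_cast hq1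
    have hq12r : (q1:ℝ) < q2 := by exact_mod_cast hq12
    -- target : 1 - t^2/(2 q1) - q1/q2 ≤ I*W/(q1^t q2)
    rw [mul_one_div]
    rw [ge_iff_le] at hImul hWmul
    rw [le_div_iff₀ hN]
    have key : ((q1:ℝ) ^ t - ((t:ℝ) * t - t) * (q1:ℝ) ^ (t-1) / 2) * ((q2:ℝ) - q1)
        ≤ (I:ℝ) * W := by
      have hWnn : (0:ℝ) ≤ (q2:ℝ) - q1 := by linarith
      calc ((q1:ℝ) ^ t - ((t:ℝ) * t - t) * (q1:ℝ) ^ (t-1) / 2) * ((q2:ℝ) - q1)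
          ≤ (I:ℝ) * ((q2:ℝ) - q1) := mul_le_mul_of_nonneg_right hImul hWnn
        _ ≤ (I:ℝ) * W := mul_le_mul_of_nonneg_left hWmul hI0
    have hq1pow : (0:ℝ) < (q1:ℝ) ^ (t-1) := by positivity
    have htt : (0:ℝ) ≤ (t:ℝ)*t - t := by nlinarith [ht']
    have hA : (0:ℝ) ≤ (t:ℝ)*((q1:ℝ)^(t-1))*q2 := by positivity
    have hB : (0:ℝ) ≤ ((t:ℝ)*t - t)*((q1:ℝ)^(t-1))*q1 :=
      mul_nonneg (mul_nonneg htt hq1pow.le) hq1'.le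
    have hL : (1 - (t:ℝ)^2/(2*q1) - (q1:ℝ)/q2) * ((q1:ℝ)^t * q2)
        = (q1:ℝ)^(t-1)*q1*q2 - ((t:ℝ)*t)*((q1:ℝ)^(t-1))*q2/2 - q1*q1*((q1:ℝ)^(t-1)) := by
      rw [hpow]
      field_simp
    have hR2 : ((q1:ℝ)^t - ((t:ℝ)*t - t)*(q1:ℝ)^(t-1)/2) * ((q2:ℝ)-q1)
        = (q1:ℝ)^(t-1)*q1*q2 - (q1:ℝ)^(t-1)*q1*q1 - ((t:ℝ)*t - t)*((q1:ℝ)^(t-1))*q2/2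
          + ((t:ℝ)*t - t)*((q1:ℝ)^(t-1))*q1/2 := by
      rw [hpow]; ring
    linarith [key, hA, hB, hL, hR2]


end OCSPPaper
end
end

section
/- Let t ≥ 1 and let X = (X_1,…,X_t) and Y = (Y_1,…,Y_t) be independent finitely supported ℤ^t-valued random vectors such that for every σ ∈ S_t, E[1_σ(X)] = E[1_σ(Y)] = 1/t!, where 1_σ is evaluated via its extension to ℤ^t. Then E[SO_{2t}(X_1,…,X_t,Y_1,…,Y_t)] = 1/t!, where SO_{2t} is evaluated via its extension to ℤ^{2t}. -/
open Classical Finset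

noncomputable section
namespace OCSPPaper

/-! ### Auxiliary lemmas -/

lemma perm_eq_of_lt_iff {n : ℕ} {π π' : Equiv.Perm (Fin n)}
    (h : ∀ i j, π i < π j ↔ π' i < π' j) : π = π' := by
  have hf : StrictMono (fun p => π' (π.symm p)) := by
    intro p q hpq
    exact (h (π.symm p) (π.symm q)).mp (by simpa using hpq)
  have hrange : Set.range (fun p => π' (π.symm p)) = Set.range (id : Fin n → Fin n) := by
    rw [Set.range_id]
    exact Set.range_eq_univ.mpr fun b => ⟨π (π'.symm b), by simp⟩
  have hg : StrictMono (id : Fin n → Fin n) := strictMono_id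
  have hwf : WellFoundedLT (Fin n) := inferInstance
  have hid : (fun p => π' (π.symm p)) = (id : Fin n → Fin n) :=
    (@StrictMono.range_inj (Fin n) (Fin n) _ _ hwf _ _ hf hg).mp hrange
  apply Equiv.ext
  intro i
  have := congrFun hid (π i)
  simpa using this.symm

def rankPerm {n : ℕ} {α : Type*} [LinearOrder α] (f : Fin n → α) : Equiv.Perm (Fin n) :=
  (Tuple.sort f)⁻¹

lemma rankPerm_lt_iff {n : ℕ} {α : Type*} [LinearOrder α] {f : Fin n → α}
    (hf : Function.Injective f) (i j : Fin n) :
    rankPerm f i < rankPerm f j ↔ f i < f j := by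
  have hm : StrictMono (f ∘ Tuple.sort f) :=
    (Tuple.monotone_sort f).strictMono_of_injective (hf.comp (Tuple.sort f).injective)
  have h1 : ∀ k, f k = (f ∘ Tuple.sort f) ((Tuple.sort f)⁻¹ k) := fun k => by simp
  rw [h1 i, h1 j, hm.lt_iff_lt]
  exact Iff.rfl

lemma compat_sortInv {m : ℕ} (a : Fin m → ℤ) : compatiblePerm a (Tuple.sort a)⁻¹ := by
  intro i j hij
  by_contra hc
  push_neg at hc
  have := Tuple.monotone_sort a hc
  simp only [Function.comp_apply, Equiv.Perm.inv_def, Equiv.apply_symm_apply] at this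
  exact absurd hij (not_lt.mpr this)

lemma compat_nonempty {m : ℕ} (a : Fin m → ℤ) :
    (Finset.univ.filter fun σ => compatiblePerm a σ).Nonempty :=
  ⟨(Tuple.sort a)⁻¹, Finset.mem_filter.mpr ⟨Finset.mem_univ _, compat_sortInv a⟩⟩

lemma monotone_comp_inv {t : ℕ} {x : Fin t → ℤ} {τ : Equiv.Perm (Fin t)}
    (hτ : compatiblePerm x τ) : Monotone (x ∘ ⇑τ⁻¹) := by
  intro p q hpq
  by_contra hc
  push_neg at hc
  simp only [Function.comp_apply] at hc
  have := hτ _ _ hc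
  simp only [Equiv.Perm.inv_def, Equiv.apply_symm_apply] at this
  exact absurd hpq (not_le.mpr this)

lemma comp_inv_eq {t : ℕ} {x : Fin t → ℤ} {τ τ' : Equiv.Perm (Fin t)}
    (hτ : compatiblePerm x τ) (hτ' : compatiblePerm x τ') :
    x ∘ ⇑τ⁻¹ = x ∘ ⇑τ'⁻¹ := by
  rw [Tuple.comp_sort_eq_comp_iff_monotone.mpr (monotone_comp_inv hτ),
      Tuple.comp_sort_eq_comp_iff_monotone.mpr (monotone_comp_inv hτ')]

lemma apply_invmul_eq {t : ℕ} {x : Fin t → ℤ} {τ τ' : Equiv.Perm (Fin t)}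
    (hτ : compatiblePerm x τ) (hτ' : compatiblePerm x τ') (i : Fin t) :
    x ((τ⁻¹ * τ') i) = x i := by
  have := congrFun (comp_inv_eq hτ hτ') (τ' i)
  simpa using this

/-! ### The block permutation -/

def blk {t : ℕ} (α β : Equiv.Perm (Fin t)) : Equiv.Perm (Fin (t + t)) :=
  finSumFinEquiv.permCongr (Equiv.sumCongr α β)

@[simp] lemma blk_castAdd {t : ℕ} (α β : Equiv.Perm (Fin t)) (i : Fin t) :
    blk α β (Fin.castAdd t i) = Fin.castAdd t (α i) := by
  simp [blk, Equiv.permCongr_apply]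

@[simp] lemma blk_natAdd {t : ℕ} (α β : Equiv.Perm (Fin t)) (i : Fin t) :
    blk α β (Fin.natAdd t i) = Fin.natAdd t (β i) := by
  unfold blk
  rw [Equiv.permCongr_apply, finSumFinEquiv_symm_apply_natAdd, Equiv.sumCongr_apply,
    Sum.map_inr, finSumFinEquiv_apply_right]

@[simp] lemma blk_addNat {t : ℕ} (α β : Equiv.Perm (Fin t)) (i : Fin t) :
    blk α β (i.addNat t) = (β i).addNat t := by
  rw [← Fin.natAdd_eq_addNat, ← Fin.natAdd_eq_addNat, blk_natAdd]

lemma blk_mul {t : ℕ} (α β α' β' : Equiv.Perm (Fin t)) :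
    blk α β * blk α' β' = blk (α * α') (β * β') := by
  apply Equiv.ext
  intro k
  induction k using Fin.addCases with
  | left i => simp only [Equiv.Perm.mul_apply, blk_castAdd]
  | right i => simp only [Equiv.Perm.mul_apply, blk_natAdd]

lemma blk_one {t : ℕ} : blk (1 : Equiv.Perm (Fin t)) 1 = 1 := by
  apply Equiv.ext
  intro k
  induction k using Fin.addCases with
  | left i => simp only [blk_castAdd, Equiv.Perm.one_apply]
  | right i => simp only [blk_natAdd, Equiv.Perm.one_apply]

/-! ### Rank patterns of the two halves -/

def rk1 {t : ℕ} (σ : Equiv.Perm (Fin (t + t))) : Equiv.Perm (Fin t) :=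
  rankPerm fun i => σ (Fin.castAdd t i)

def rk2 {t : ℕ} (σ : Equiv.Perm (Fin (t + t))) : Equiv.Perm (Fin t) :=
  rankPerm fun i => σ (Fin.natAdd t i)

lemma inj_cast {t : ℕ} (σ : Equiv.Perm (Fin (t + t))) :
    Function.Injective fun i => σ (Fin.castAdd t i) := fun i j h => by
  have := σ.injective h
  simpa [Fin.ext_iff] using this

lemma inj_nat {t : ℕ} (σ : Equiv.Perm (Fin (t + t))) :
    Function.Injective fun i => σ (Fin.natAdd t i) := fun i j h => by
  have := σ.injective h
  simpa [Fin.ext_iff] using this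

lemma rk1_lt {t : ℕ} (σ : Equiv.Perm (Fin (t + t))) (i j : Fin t) :
    rk1 σ i < rk1 σ j ↔ σ (Fin.castAdd t i) < σ (Fin.castAdd t j) :=
  rankPerm_lt_iff (inj_cast σ) i j

lemma rk2_lt {t : ℕ} (σ : Equiv.Perm (Fin (t + t))) (i j : Fin t) :
    rk2 σ i < rk2 σ j ↔ σ (Fin.natAdd t i) < σ (Fin.natAdd t j) :=
  rankPerm_lt_iff (inj_nat σ) i j

lemma rk1_compat {t : ℕ} {x y : Fin t → ℤ} {σ : Equiv.Perm (Fin (t + t))}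
    (hσ : compatiblePerm (Fin.append x y) σ) : compatiblePerm x (rk1 σ) :=
  fun i j hij => (rk1_lt σ i j).mpr (hσ _ _ (by rw [Fin.append_left, Fin.append_left]; exact hij))

lemma rk2_compat {t : ℕ} {x y : Fin t → ℤ} {σ : Equiv.Perm (Fin (t + t))}
    (hσ : compatiblePerm (Fin.append x y) σ) : compatiblePerm y (rk2 σ) :=
  fun i j hij => (rk2_lt σ i j).mpr (hσ _ _ (by rw [Fin.append_right, Fin.append_right]; exact hij))

lemma mem_soPred_iff {t : ℕ} {σ : Equiv.Perm (Fin (t + t))} :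
    σ ∈ soPred t ↔ rk1 σ = rk2 σ := by
  rw [soPred, Finset.mem_filter]
  simp only [Finset.mem_univ, true_and]
  constructor
  · intro h
    apply perm_eq_of_lt_iff
    intro i j
    rw [rk1_lt, rk2_lt]
    exact h i j
  · intro h i j
    rw [← rk1_lt, ← rk2_lt, h]

/-! ### Fiber counting -/

lemma fiber_map_mem {t : ℕ} {x y : Fin t → ℤ} {τ ρ τ' ρ' : Equiv.Perm (Fin t)}
    (hτ : compatiblePerm x τ) (hτ' : compatiblePerm x τ')
    (hρ : compatiblePerm y ρ) (hρ' : compatiblePerm y ρ')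
    {σ : Equiv.Perm (Fin (t + t))}
    (hσ : compatiblePerm (Fin.append x y) σ) (h1 : rk1 σ = τ) (h2 : rk2 σ = ρ) :
    compatiblePerm (Fin.append x y) (σ * blk (τ⁻¹ * τ') (ρ⁻¹ * ρ')) ∧
      rk1 (σ * blk (τ⁻¹ * τ') (ρ⁻¹ * ρ')) = τ' ∧
      rk2 (σ * blk (τ⁻¹ * τ') (ρ⁻¹ * ρ')) = ρ' := by
  have ha : ∀ k, Fin.append x y (blk (τ⁻¹ * τ') (ρ⁻¹ * ρ') k) = Fin.append x y k := by
    intro k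
    induction k using Fin.addCases with
    | left i =>
        rw [blk_castAdd, Fin.append_left, Fin.append_left]
        exact apply_invmul_eq hτ hτ' i
    | right i =>
        rw [blk_natAdd, Fin.append_right, Fin.append_right]
        exact apply_invmul_eq hρ hρ' i
  refine ⟨?_, ?_, ?_⟩
  · intro i j hij
    exact hσ _ _ (by rw [ha i, ha j]; exact hij)
  · apply perm_eq_of_lt_iff
    intro i j
    rw [rk1_lt, Equiv.Perm.mul_apply, Equiv.Perm.mul_apply, blk_castAdd, blk_castAdd,
      ← rk1_lt, h1]
    simp [Equiv.Perm.mul_apply]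
  · apply perm_eq_of_lt_iff
    intro i j
    rw [rk2_lt, Equiv.Perm.mul_apply, Equiv.Perm.mul_apply, blk_natAdd, blk_natAdd,
      ← rk2_lt, h2]
    simp [Equiv.Perm.mul_apply]

lemma fiber_card_eq {t : ℕ} {x y : Fin t → ℤ} {τ ρ τ' ρ' : Equiv.Perm (Fin t)}
    (hτ : compatiblePerm x τ) (hτ' : compatiblePerm x τ')
    (hρ : compatiblePerm y ρ) (hρ' : compatiblePerm y ρ') :
    (Finset.univ.filter fun σ : Equiv.Perm (Fin (t + t)) =>
        compatiblePerm (Fin.append x y) σ ∧ rk1 σ = τ ∧ rk2 σ = ρ).card =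
    (Finset.univ.filter fun σ : Equiv.Perm (Fin (t + t)) =>
        compatiblePerm (Fin.append x y) σ ∧ rk1 σ = τ' ∧ rk2 σ = ρ').card := by
  have hcan : ∀ (α β α' β' : Equiv.Perm (Fin t)) (σ : Equiv.Perm (Fin (t+t))),
      σ * blk (α⁻¹ * α') (β⁻¹ * β') * blk (α'⁻¹ * α) (β'⁻¹ * β) = σ := by
    intro α β α' β' σ
    rw [mul_assoc, blk_mul]
    have h1 : α⁻¹ * α' * (α'⁻¹ * α) = 1 := by group
    have h2 : β⁻¹ * β' * (β'⁻¹ * β) = 1 := by group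
    rw [h1, h2, blk_one, mul_one]
  apply Finset.card_bij' (fun σ _ => σ * blk (τ⁻¹ * τ') (ρ⁻¹ * ρ'))
    (fun σ _ => σ * blk (τ'⁻¹ * τ) (ρ'⁻¹ * ρ))
  · intro σ hσ
    rw [Finset.mem_filter] at hσ ⊢
    obtain ⟨-, hc, h1, h2⟩ := hσ
    exact ⟨Finset.mem_univ _, fiber_map_mem hτ hτ' hρ hρ' hc h1 h2⟩
  · intro σ hσ
    rw [Finset.mem_filter] at hσ ⊢
    obtain ⟨-, hc, h1, h2⟩ := hσ
    exact ⟨Finset.mem_univ _, fiber_map_mem hτ' hτ hρ' hρ hc h1 h2⟩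
  · intro σ _
    exact hcan τ ρ τ' ρ' σ
  · intro σ _
    exact hcan τ' ρ' τ ρ σ

/-! ### Key decomposition -/

lemma extPred_singleton {t : ℕ} (z : Fin t → ℤ) (σ : Equiv.Perm (Fin t)) :
    extPred {σ} z = (if compatiblePerm z σ then (1:ℝ) else 0) /
      ((Finset.univ.filter fun π => compatiblePerm z π).card : ℝ) := by
  have hfil : (Finset.univ.filter fun π => compatiblePerm z π ∧ π ∈ ({σ} : Finset _))
      = if compatiblePerm z σ then {σ} else (∅ : Finset (Equiv.Perm (Fin t))) := by
    split_ifs with h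
    · ext π
      simp only [Finset.mem_filter, Finset.mem_univ, true_and, Finset.mem_singleton]
      constructor
      · rintro ⟨-, rfl⟩; rfl
      · rintro rfl; exact ⟨h, rfl⟩
    · ext π
      simp only [Finset.mem_filter, Finset.mem_univ, true_and, Finset.mem_singleton,
        Finset.notMem_empty, iff_false, not_and]
      rintro hc rfl; exact h hc
  rw [extPred, hfil]
  split_ifs with h <;> simp

lemma ext_so_eq (t : ℕ) (x y : Fin t → ℤ) :
    extPred (soPred t) (Fin.append x y)
      = ∑ σ : Equiv.Perm (Fin t), extPred {σ} x * extPred {σ} y := by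
  classical
  set Ax := Finset.univ.filter (fun σ : Equiv.Perm (Fin t) => compatiblePerm x σ) with hAxdef
  set Ay := Finset.univ.filter (fun σ : Equiv.Perm (Fin t) => compatiblePerm y σ) with hAydef
  set I := Finset.univ.filter
      (fun σ : Equiv.Perm (Fin t) => compatiblePerm x σ ∧ compatiblePerm y σ) with hIdef
  set A := Finset.univ.filter
      (fun σ : Equiv.Perm (Fin (t + t)) => compatiblePerm (Fin.append x y) σ) with hAdef
  set B := Finset.univ.filter (fun σ : Equiv.Perm (Fin (t + t)) =>
      compatiblePerm (Fin.append x y) σ ∧ σ ∈ soPred t) with hBdef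
  -- right hand side
  have hRHS : (∑ σ : Equiv.Perm (Fin t), extPred {σ} x * extPred {σ} y)
      = (I.card : ℝ) / ((Ax.card : ℝ) * (Ay.card : ℝ)) := by
    have hterm : ∀ σ : Equiv.Perm (Fin t), extPred {σ} x * extPred {σ} y
        = (if compatiblePerm x σ ∧ compatiblePerm y σ then (1:ℝ) else 0)
            / ((Ax.card : ℝ) * (Ay.card : ℝ)) := by
      intro σ
      rw [extPred_singleton x σ, extPred_singleton y σ, ← hAxdef, ← hAydef, div_mul_div_comm]
      congr 1
      split_ifs with h1 h2 h3 <;> simp_all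
    simp_rw [hterm]
    rw [← Finset.sum_div]
    congr 1
    rw [Finset.sum_boole, hIdef]
  -- fibers
  set K := (Finset.univ.filter fun σ : Equiv.Perm (Fin (t + t)) =>
      compatiblePerm (Fin.append x y) σ ∧
        rk1 σ = (Tuple.sort x)⁻¹ ∧ rk2 σ = (Tuple.sort y)⁻¹).card with hKdef
  have hfib : ∀ τ ρ : Equiv.Perm (Fin t), compatiblePerm x τ → compatiblePerm y ρ →
      (Finset.univ.filter fun σ : Equiv.Perm (Fin (t + t)) =>
          compatiblePerm (Fin.append x y) σ ∧ rk1 σ = τ ∧ rk2 σ = ρ).card = K :=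
    fun τ ρ hcτ hcρ => fiber_card_eq hcτ (compat_sortInv x) hcρ (compat_sortInv y)
  -- counting A
  have hAcard : A.card = Ax.card * Ay.card * K := by
    have hmaps : ∀ σ ∈ A, (rk1 σ, rk2 σ) ∈ Ax ×ˢ Ay := by
      intro σ hσ
      rw [hAdef, Finset.mem_filter] at hσ
      rw [Finset.mem_product, hAxdef, hAydef, Finset.mem_filter, Finset.mem_filter]
      exact ⟨⟨Finset.mem_univ _, rk1_compat hσ.2⟩, ⟨Finset.mem_univ _, rk2_compat hσ.2⟩⟩
    rw [Finset.card_eq_sum_card_fiberwise hmaps]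
    have hterm : ∀ p ∈ Ax ×ˢ Ay,
        (A.filter fun σ => (rk1 σ, rk2 σ) = p).card = K := by
      intro p hp
      rw [Finset.mem_product, hAxdef, hAydef, Finset.mem_filter, Finset.mem_filter] at hp
      rw [← hfib p.1 p.2 hp.1.2 hp.2.2, hAdef, Finset.filter_filter]
      congr 1
      apply Finset.filter_congr
      intro σ _
      constructor
      · rintro ⟨hc, hpq⟩
        exact ⟨hc, congrArg Prod.fst hpq, congrArg Prod.snd hpq⟩
      · rintro ⟨hc, h1, h2⟩
        refine ⟨hc, ?_⟩
        rw [h1, h2]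
    rw [Finset.sum_congr rfl hterm, Finset.sum_const, Finset.card_product, smul_eq_mul]
  -- counting B
  have hBcard : B.card = I.card * K := by
    set D := I.image (fun τ => (τ, τ)) with hDdef
    have hmaps : ∀ σ ∈ B, (rk1 σ, rk2 σ) ∈ D := by
      intro σ hσ
      rw [hBdef, Finset.mem_filter] at hσ
      obtain ⟨-, hc, hso⟩ := hσ
      have he : rk1 σ = rk2 σ := mem_soPred_iff.mp hso
      rw [hDdef, Finset.mem_image]
      refine ⟨rk1 σ, ?_, by rw [he]⟩
      rw [hIdef, Finset.mem_filter]
      exact ⟨Finset.mem_univ _, rk1_compat hc, by rw [he]; exact rk2_compat hc⟩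
    rw [Finset.card_eq_sum_card_fiberwise hmaps]
    have hterm : ∀ p ∈ D, (B.filter fun σ => (rk1 σ, rk2 σ) = p).card = K := by
      intro p hp
      rw [hDdef, Finset.mem_image] at hp
      obtain ⟨τ, hτI, rfl⟩ := hp
      rw [hIdef, Finset.mem_filter] at hτI
      rw [← hfib τ τ hτI.2.1 hτI.2.2, hBdef, Finset.filter_filter]
      congr 1
      apply Finset.filter_congr
      intro σ _
      constructor
      · rintro ⟨⟨hc, hso⟩, hpq⟩
        exact ⟨hc, congrArg Prod.fst hpq, congrArg Prod.snd hpq⟩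
      · rintro ⟨hc, h1, h2⟩
        exact ⟨⟨hc, mem_soPred_iff.mpr (h1.trans h2.symm)⟩, by rw [h1, h2]⟩
    rw [Finset.sum_congr rfl hterm, Finset.sum_const, smul_eq_mul]
    congr 1
    rw [hDdef]
    exact Finset.card_image_of_injective _ (fun a b h => congrArg Prod.fst h)
  -- nonvanishing
  have hAne : A.card ≠ 0 := by
    rw [hAdef]
    exact Finset.card_ne_zero_of_mem
      (Finset.mem_filter.mpr ⟨Finset.mem_univ _, compat_sortInv _⟩)
  have hKne : K ≠ 0 := by
    intro h
    rw [h, mul_zero] at hAcard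
    exact hAne hAcard
  -- assemble
  have hL : extPred (soPred t) (Fin.append x y) = (B.card : ℝ) / (A.card : ℝ) := rfl
  rw [hRHS, hL, hBcard, hAcard]
  push_cast
  rw [mul_div_mul_right _ _ (by exact_mod_cast hKne)]

/-- decoupled Same-Order value.
If `X` and `Y` are independent finitely supported `ℤ^t`-valued random vectors, each of whose
relative orders is uniform (`E[1_σ] = 1/t!` for every `σ ∈ S_t`), then
`E[SO_{2t}(X, Y)] = 1/t!`. -/
theorem decoupled_same_order (t : ℕ) (ht : 1 ≤ t)
    (DX DY : (Fin t → ℤ) → ℝ)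
    (hXnn : ∀ x, 0 ≤ DX x) (hYnn : ∀ y, 0 ≤ DY y)
    (hXfin : (Function.support DX).Finite) (hYfin : (Function.support DY).Finite)
    (hXsum : ∑ᶠ x, DX x = 1) (hYsum : ∑ᶠ y, DY y = 1)
    (hXord : ∀ σ : Equiv.Perm (Fin t),
      (∑ᶠ x, DX x * extPred {σ} x) = 1 / (t.factorial : ℝ))
    (hYord : ∀ σ : Equiv.Perm (Fin t),
      (∑ᶠ y, DY y * extPred {σ} y) = 1 / (t.factorial : ℝ)) :
    (∑ᶠ p : (Fin t → ℤ) × (Fin t → ℤ),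
        (DX p.1 * DY p.2) * extPred (soPred t) (Fin.append p.1 p.2))
      = 1 / (t.factorial : ℝ) := by
  classical
  set sX := hXfin.toFinset with hsX
  set sY := hYfin.toFinset with hsY
  have hsupp : (Function.support fun p : (Fin t → ℤ) × (Fin t → ℤ) =>
      (DX p.1 * DY p.2) * extPred (soPred t) (Fin.append p.1 p.2)) ⊆ ↑(sX ×ˢ sY) := by
    intro p hp
    simp only [Function.mem_support] at hp
    have hx : DX p.1 ≠ 0 := fun h => hp (by rw [h]; ring)
    have hy : DY p.2 ≠ 0 := fun h => hp (by rw [h]; ring)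
    simp only [Finset.coe_product, Set.mem_prod, hsX, hsY, Set.Finite.coe_toFinset]
    exact ⟨hx, hy⟩
  have hXs : ∀ σ : Equiv.Perm (Fin t),
      ∑ x ∈ sX, DX x * extPred {σ} x = 1 / (t.factorial : ℝ) := by
    intro σ
    rw [← hXord σ]
    refine (finsum_eq_sum_of_support_subset _ ?_).symm
    intro x hx
    simp only [Function.mem_support] at hx
    have : DX x ≠ 0 := fun h => hx (by rw [h]; ring)
    simp only [hsX, Set.Finite.coe_toFinset]
    exact this
  have hYs : ∀ σ : Equiv.Perm (Fin t),
      ∑ y ∈ sY, DY y * extPred {σ} y = 1 / (t.factorial : ℝ) := by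
    intro σ
    rw [← hYord σ]
    refine (finsum_eq_sum_of_support_subset _ ?_).symm
    intro y hy
    simp only [Function.mem_support] at hy
    have : DY y ≠ 0 := fun h => hy (by rw [h]; ring)
    simp only [hsY, Set.Finite.coe_toFinset]
    exact this
  rw [finsum_eq_sum_of_support_subset _ hsupp, Finset.sum_product]
  calc ∑ x ∈ sX, ∑ y ∈ sY, (DX x * DY y) * extPred (soPred t) (Fin.append x y)
      = ∑ x ∈ sX, ∑ y ∈ sY, ∑ σ : Equiv.Perm (Fin t),
          (DX x * extPred {σ} x) * (DY y * extPred {σ} y) := by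
        refine Finset.sum_congr rfl fun x _ => Finset.sum_congr rfl fun y _ => ?_
        rw [ext_so_eq, Finset.mul_sum]
        exact Finset.sum_congr rfl fun σ _ => by ring
    _ = ∑ x ∈ sX, ∑ σ : Equiv.Perm (Fin t), ∑ y ∈ sY,
          (DX x * extPred {σ} x) * (DY y * extPred {σ} y) :=
        Finset.sum_congr rfl fun x _ => Finset.sum_comm
    _ = ∑ σ : Equiv.Perm (Fin t), ∑ x ∈ sX, ∑ y ∈ sY,
          (DX x * extPred {σ} x) * (DY y * extPred {σ} y) := Finset.sum_comm
    _ = ∑ σ : Equiv.Perm (Fin t),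
          (∑ x ∈ sX, DX x * extPred {σ} x) * (∑ y ∈ sY, DY y * extPred {σ} y) := by
        refine Finset.sum_congr rfl fun σ _ => ?_
        rw [Finset.sum_mul_sum]
    _ = ∑ _σ : Equiv.Perm (Fin t), (1 / (t.factorial : ℝ)) * (1 / (t.factorial : ℝ)) := by
        refine Finset.sum_congr rfl fun σ _ => by rw [hXs σ, hYs σ]
    _ = 1 / (t.factorial : ℝ) := by
        rw [Finset.sum_const, Finset.card_univ, Fintype.card_perm, Fintype.card_fin,
          nsmul_eq_mul]
        have hfac : (t.factorial : ℝ) ≠ 0 := Nat.cast_ne_zero.mpr t.factorial_ne_zero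
        field_simp

end OCSPPaper
end
end
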